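/- Let d ≥ 1 and ε > 0. The regularization ρ_ε : ℝ^d → ℝ is differentiable at every point, and its gradient α_ε(z) = ∇ρ_ε(z) satisfies ⟨α_ε(z), z⟩ ≥ 0 for every z ∈ ℝ^d. -/

import Mathlib

open scoped RealInnerProductSpace

noncomputable def rhoEps (d : ℕ) (ε : ℝ) (z : EuclideanSpace ℝ (Fin d)) : ℝ :=
  if ε ≤ ‖z‖ then ‖z‖ - (1 - 2 / Real.pi) * ε
  else (2 * ε / Real.pi) * (1 - Real.cos (Real.pi * ‖z‖ / (2 * ε)))

/-- Radial profile of `rhoEps`. -/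
noncomputable def gFun (ε r : ℝ) : ℝ :=
  if ε ≤ r then r - (1 - 2 / Real.pi) * ε
  else (2 * ε / Real.pi) * (1 - Real.cos (Real.pi * r / (2 * ε)))

/-- Derivative of the radial profile. -/
noncomputable def gDer (ε r : ℝ) : ℝ :=
  if ε ≤ r then 1 else Real.sin (Real.pi * r / (2 * ε))

lemma cosBranch_hasDerivAt {ε : ℝ} (hε : 0 < ε) (r : ℝ) :
    HasDerivAt (fun r => (2 * ε / Real.pi) * (1 - Real.cos (Real.pi * r / (2 * ε))))
      (Real.sin (Real.pi * r / (2 * ε))) r := by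
  have h1 : HasDerivAt (fun r : ℝ => Real.pi * r / (2 * ε)) (Real.pi / (2 * ε)) r := by
    simpa using ((hasDerivAt_id r).const_mul Real.pi).div_const (2 * ε)
  have h2 := (Real.hasDerivAt_cos (Real.pi * r / (2 * ε))).comp r h1
  have h3 := ((hasDerivAt_const r (1 : ℝ)).sub h2).const_mul (2 * ε / Real.pi)
  convert h3 using 1
  all_goals try rfl
  field_simp
  ring

lemma gFun_hasDerivAt {ε : ℝ} (hε : 0 < ε) (r : ℝ) :
    HasDerivAt (gFun ε) (gDer ε r) r := by
  rcases lt_trichotomy r ε with h | h | h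
  · have hev : gFun ε =ᶠ[nhds r]
        (fun r => (2 * ε / Real.pi) * (1 - Real.cos (Real.pi * r / (2 * ε)))) := by
      filter_upwards [eventually_lt_nhds h] with x hx
      simp [gFun, not_le.2 hx]
    rw [gDer, if_neg (not_le.2 h)]
    exact (cosBranch_hasDerivAt hε r).congr_of_eventuallyEq hev
  · rw [h]
    have hx : Real.pi * ε / (2 * ε) = Real.pi / 2 := by
      rw [mul_comm 2 ε, ← div_div, mul_div_assoc, div_self hε.ne', mul_one]
    have hval : gFun ε ε = (2 * ε / Real.pi) * (1 - Real.cos (Real.pi * ε / (2 * ε))) := by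
      rw [gFun, if_pos le_rfl, hx, Real.cos_pi_div_two]
      field_simp
      ring
    have hsin : Real.sin (Real.pi * ε / (2 * ε)) = 1 := by
      rw [hx, Real.sin_pi_div_two]
    have hIci : HasDerivWithinAt (gFun ε) 1 (Set.Ici ε) ε := by
      refine (((hasDerivAt_id ε).sub_const ((1 - 2 / Real.pi) * ε)).hasDerivWithinAt).congr
        (fun x hx => ?_) ?_
      · simp [gFun, if_pos (Set.mem_Ici.1 hx)]
      · simp [gFun]
    have hIic : HasDerivWithinAt (gFun ε) 1 (Set.Iic ε) ε := by
      have hc := ((cosBranch_hasDerivAt hε ε).hasDerivWithinAt (s := Set.Iic ε))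
      rw [hsin] at hc
      refine hc.congr (fun x hx => ?_) hval
      rcases eq_or_lt_of_le (Set.mem_Iic.1 hx) with hx' | hx'
      · rw [hx']; exact hval
      · simp [gFun, not_le.2 hx']
    have := hIic.union hIci
    rw [Set.Iic_union_Ici] at this
    rw [gDer, if_pos le_rfl]
    exact hasDerivWithinAt_univ.1 this
  · have hev : gFun ε =ᶠ[nhds r] (fun x => x - (1 - 2 / Real.pi) * ε) := by
      filter_upwards [eventually_gt_nhds h] with x hx
      simp [gFun, le_of_lt hx]
    rw [gDer, if_pos h.le]
    exact (((hasDerivAt_id r).sub_const ((1 - 2 / Real.pi) * ε))).congr_of_eventuallyEq hev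

lemma gDer_nonneg {ε : ℝ} (hε : 0 < ε) {r : ℝ} (hr : 0 ≤ r) : 0 ≤ gDer ε r := by
  rw [gDer]
  split
  · exact zero_le_one
  · rename_i hle
    apply Real.sin_nonneg_of_nonneg_of_le_pi
    · positivity
    · rw [div_le_iff₀ (by positivity)]
      have h2 : r < ε := not_le.1 hle
      nlinarith [Real.pi_pos]

/-- `ρ_ε` is differentiable everywhere and its gradient
`α_ε(z) = ∇ρ_ε(z)` satisfies `⟨α_ε(z), z⟩ ≥ 0` for every `z`. -/
theorem rhoEps_grad_inner_nonneg (d : ℕ) (hd : 1 ≤ d) (ε : ℝ) (hε : 0 < ε)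
    (z : EuclideanSpace ℝ (Fin d)) :
    DifferentiableAt ℝ (rhoEps d ε) z ∧ 0 ≤ ⟪gradient (rhoEps d ε) z, z⟫ := by
  by_cases hz : z = 0
  · subst hz
    have hF : HasFDerivAt
        (fun z : EuclideanSpace ℝ (Fin d) =>
          (2 * ε / Real.pi) * (1 - Real.cos (Real.pi * ‖z‖ / (2 * ε))))
        (0 : EuclideanSpace ℝ (Fin d) →L[ℝ] ℝ) 0 := by
      rw [hasFDerivAt_iff_isLittleO_nhds_zero]
      simp only [zero_add, norm_zero, mul_zero, zero_div, Real.cos_zero, sub_self,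
        ContinuousLinearMap.zero_apply, sub_zero]
      rw [Asymptotics.isLittleO_iff]
      intro c hc
      have hK : (0 : ℝ) < Real.pi / (4 * ε) := by positivity
      rw [Metric.eventually_nhds_iff]
      refine ⟨c / (Real.pi / (4 * ε)), div_pos hc hK, fun {h} hd' => ?_⟩
      rw [dist_zero_right] at hd'
      have hx := Real.one_sub_sq_div_two_le_cos (x := Real.pi * ‖h‖ / (2 * ε))
      have hc1 : Real.cos (Real.pi * ‖h‖ / (2 * ε)) ≤ 1 := Real.cos_le_one _
      have hnn : (0 : ℝ) ≤ ‖h‖ := norm_nonneg h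
      have hb : ‖(2 * ε / Real.pi) * (1 - Real.cos (Real.pi * ‖h‖ / (2 * ε)))‖
          ≤ Real.pi / (4 * ε) * ‖h‖ ^ 2 := by
        rw [Real.norm_eq_abs, abs_of_nonneg (mul_nonneg (by positivity) (by linarith))]
        have hp := Real.pi_pos
        rw [div_pow] at hx
        have : (1 : ℝ) - Real.cos (Real.pi * ‖h‖ / (2 * ε))
            ≤ (Real.pi * ‖h‖) ^ 2 / (2 * ε) ^ 2 / 2 := by linarith
        calc (2 * ε / Real.pi) * (1 - Real.cos (Real.pi * ‖h‖ / (2 * ε)))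
            ≤ (2 * ε / Real.pi) * ((Real.pi * ‖h‖) ^ 2 / (2 * ε) ^ 2 / 2) := by
              apply mul_le_mul_of_nonneg_left this (by positivity)
          _ = Real.pi / (4 * ε) * ‖h‖ ^ 2 := by field_simp; ring
      calc ‖(2 * ε / Real.pi) * (1 - Real.cos (Real.pi * ‖h‖ / (2 * ε)))‖
          ≤ Real.pi / (4 * ε) * ‖h‖ ^ 2 := hb
        _ = (Real.pi / (4 * ε) * ‖h‖) * ‖h‖ := by ring
        _ ≤ c * ‖h‖ := by
            apply mul_le_mul_of_nonneg_right _ hnn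
            rw [← le_div_iff₀' hK]
            exact hd'.le
    have hf : HasFDerivAt (rhoEps d ε) (0 : EuclideanSpace ℝ (Fin d) →L[ℝ] ℝ) 0 := by
      refine hF.congr_of_eventuallyEq ?_
      filter_upwards [Metric.ball_mem_nhds (0 : EuclideanSpace ℝ (Fin d)) hε] with x hx
      rw [Metric.mem_ball, dist_zero_right] at hx
      simp [rhoEps, not_le.2 hx]
    have hgrad : HasGradientAt (rhoEps d ε) (0 : EuclideanSpace ℝ (Fin d)) 0 := by
      rw [hasGradientAt_iff_hasFDerivAt, map_zero]
      exact hf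
    exact ⟨hf.differentiableAt, by rw [hgrad.gradient]; simp⟩
  · have hr : 0 < ‖z‖ := norm_pos_iff.2 hz
    have hN : DifferentiableAt ℝ (fun x : EuclideanSpace ℝ (Fin d) => ‖x‖) z :=
      ((contDiffAt_norm ℝ (n := 1) hz).differentiableAt one_ne_zero)
    set L := fderiv ℝ (fun x : EuclideanSpace ℝ (Fin d) => ‖x‖) z with hL
    have hNL : HasFDerivAt (fun x : EuclideanSpace ℝ (Fin d) => ‖x‖) L z := hN.hasFDerivAt
    have hLz : L z = ‖z‖ := by
      have hφ : HasDerivAt (fun t : ℝ => t • z) z 1 := by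
        simpa using (hasDerivAt_id (1 : ℝ)).smul_const z
      have h1 : HasDerivAt (fun t : ℝ => ‖t • z‖) (L z) 1 :=
        HasFDerivAt.comp_hasDerivAt 1 (by simpa using hNL) hφ
      have h2 : HasDerivAt (fun t : ℝ => t * ‖z‖) ‖z‖ 1 := by
        simpa using (hasDerivAt_id (1 : ℝ)).mul_const ‖z‖
      have hev : (fun t : ℝ => t * ‖z‖) =ᶠ[nhds 1] (fun t : ℝ => ‖t • z‖) := by
        filter_upwards [eventually_gt_nhds (zero_lt_one (α := ℝ))] with t ht
        rw [norm_smul, Real.norm_eq_abs, abs_of_pos ht]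
      exact h1.unique (h2.congr_of_eventuallyEq hev.symm)
    have hg := gFun_hasDerivAt (ε := ε) hε ‖z‖
    have hf : HasFDerivAt (rhoEps d ε) (gDer ε ‖z‖ • L) z :=
      hg.comp_hasFDerivAt z hNL
    have hgrad : HasGradientAt (rhoEps d ε)
        ((InnerProductSpace.toDual ℝ (EuclideanSpace ℝ (Fin d))).symm (gDer ε ‖z‖ • L)) z := by
      rw [hasGradientAt_iff_hasFDerivAt, LinearIsometryEquiv.apply_symm_apply]
      exact hf
    refine ⟨hf.differentiableAt, ?_⟩
    rw [hgrad.gradient, InnerProductSpace.toDual_symm_apply]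
    have hval : (gDer ε ‖z‖ • L) z = gDer ε ‖z‖ * ‖z‖ := by
      rw [ContinuousLinearMap.smul_apply, hLz, smul_eq_mul]
    rw [hval]
    exact mul_nonneg (gDer_nonneg hε (norm_nonneg z)) (norm_nonneg z)
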